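/- Let O be a Dedekind domain, M a finitely generated O-module, and m ∈ M an element that is not torsion over O. Then there are only finitely many nonzero prime ideals p of O such that m ∈ p • M. -/

import Mathlib

/-- Let `O` be a Dedekind domain, `M` a finitely generated `O`-module and `m ∈ M` an element
that is not torsion over `O`. Then there are only finitely many nonzero prime ideals `p` of
`O` such that `m ∈ p • M`. -/
theorem stmt_2 {O M : Type*} [CommRing O] [IsDedekindDomain O] [AddCommGroup M] [Module O M]
    [Module.Finite O M] (m : M) (hm : ∀ r : O, r • m = 0 → r = 0) :
    {p : Ideal O | p ≠ ⊥ ∧ p.IsPrime ∧ m ∈ p • (⊤ : Submodule O M)}.Finite := by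
  classical
  set K := FractionRing O
  set N := LocalizedModule (nonZeroDivisors O) M
  set ι : M →ₗ[O] N := LocalizedModule.mkLinearMap (nonZeroDivisors O) M
  have hιm : ι m ≠ 0 := by
    intro h
    obtain ⟨s', hs'⟩ := (IsLocalizedModule.eq_zero_iff (nonZeroDivisors O) ι).mp h
    have : (s' : O) = 0 := hm s' hs'
    exact nonZeroDivisors.ne_zero s'.2 this
  -- find a K-linear functional not vanishing on ι m
  obtain ⟨f, hf⟩ : ∃ f : Module.Dual K N, f (ι m) ≠ 0 := by
    by_contra h
    push_neg at h
    exact hιm ((Module.forall_dual_apply_eq_zero_iff K (ι m)).mp h)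
  set g : M →ₗ[O] K := (f.restrictScalars O).comp ι with hg_def
  have hgm : g m ≠ 0 := hf
  -- common denominator
  obtain ⟨s, hs⟩ := Module.Finite.fg_top (R := O) (M := M)
  obtain ⟨d, hd⟩ := IsLocalization.exist_integer_multiples (nonZeroDivisors O) s g
  set φ : M →ₗ[O] K := (d : O) • g with hφ_def
  have hrange : Submodule.map φ ⊤ ≤ LinearMap.range (Algebra.linearMap O K) := by
    rw [← hs, Submodule.map_span_le]
    intro x hx
    obtain ⟨b, hb⟩ := hd x hx
    exact ⟨b, hb⟩
  have hφm_int : ∃ c : O, algebraMap O K c = φ m := by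
    obtain ⟨c, hc⟩ := hrange ⟨m, trivial, rfl⟩
    exact ⟨c, hc⟩
  obtain ⟨c, hc⟩ := hφm_int
  have hφm_ne : φ m ≠ 0 := by
    have hd0 : algebraMap O K (d : O) ≠ 0 :=
      IsFractionRing.to_map_ne_zero_of_mem_nonZeroDivisors d.2
    simp only [hφ_def, LinearMap.smul_apply, Algebra.smul_def]
    exact mul_ne_zero hd0 hgm
  have hc0 : c ≠ 0 := by
    rintro rfl
    rw [map_zero] at hc
    exact hφm_ne hc.symm
  -- main claim: any prime in our set contains c
  have key : ∀ p : Ideal O, p.IsPrime → m ∈ p • (⊤ : Submodule O M) → c ∈ p := by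
    intro p hp hmp
    have h1 : φ m ∈ Submodule.map φ (p • (⊤ : Submodule O M)) :=
      Submodule.mem_map_of_mem hmp
    rw [Submodule.map_smul''] at h1
    have h2 : p • Submodule.map φ ⊤ ≤ p • LinearMap.range (Algebra.linearMap O K) :=
      Submodule.smul_mono le_rfl hrange
    have h3 : p • LinearMap.range (Algebra.linearMap O K)
        = Submodule.map (Algebra.linearMap O K) p := by
      rw [← Submodule.map_top, ← Submodule.map_smul'']
      congr 1
      apply le_antisymm
      · exact Submodule.smul_le.mpr fun a ha n _ => by
          simpa [smul_eq_mul] using p.mul_mem_right n ha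
      · intro x hx
        simpa using Submodule.smul_mem_smul hx (Submodule.mem_top (R := O) (x := (1 : O)))
    rw [h3] at h2
    obtain ⟨a, ha, haeq⟩ := h2 h1
    simp only [Algebra.linearMap_apply] at haeq
    have : a = c := by
      apply IsFractionRing.injective O K
      rw [haeq, hc]
    rwa [← this]
  -- conclude finiteness
  have hfin := Ideal.finite_factors (I := Ideal.span {c})
    (by simpa using hc0)
  apply Set.Finite.subset (hfin.image IsDedekindDomain.HeightOneSpectrum.asIdeal)
  rintro p ⟨hpbot, hp, hmp⟩
  refine ⟨⟨p, hp, hpbot⟩, ?_, rfl⟩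
  rw [Set.mem_setOf_eq, Ideal.dvd_iff_le, Ideal.span_singleton_le_iff_mem]
  exact key p hp hmp
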